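/- For every k ≥ 2, n ≥ 1, every function f : ({0,1}^n)^k → {0,1}, and every ℓ ≥ 1 such that (k−1) divides ℓ, the deterministic k-party NOF communication complexity of the ℓ-fold direct sum of f satisfies D^NOF(f^ℓ) ≤ ℓ·n/(k−1) + ℓ. -/

import Mathlib

/-!  Deterministic `k`-party Number-On-the-Forehead (NOF) blackboard protocols.
Inputs come from a type `X`; party `P_i` sees every input except its own, which is
modelled by giving each party the "erased" input vector `NOFview i x` (its own
coordinate replaced by `none`).  At each step the speaker (determined by the
transcript written so far on the shared board) writes one bit, depending on the
transcript and on the inputs it sees.  After `P.T` steps every party must be able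
to determine the required output from the transcript and the inputs it sees. -/
structure NOFProtocol (k : ℕ) (X O : Type) where
  /-- number of bits written on the board (the cost of the protocol) -/
  T : ℕ
  /-- who speaks next, as a function of the transcript -/
  speaker : List Bool → Fin k
  /-- the bit written by the speaker: a function of the transcript and of the
  inputs the speaker sees -/
  nextBit : List Bool → (Fin k → Option X) → Bool
  /-- how party `i` determines the output from the final transcript and the
  inputs it sees -/
  out : Fin k → List Bool → (Fin k → Option X) → O

/-- What party `i` sees in the NOF model: every input except its own. -/
def NOFview {k : ℕ} {X : Type} (i : Fin k) (x : Fin k → X) : Fin k → Option X :=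
  fun j => if j = i then none else some (x j)

/-- The transcript on the board after `t` steps. -/
def NOFrun {k : ℕ} {X O : Type} (P : NOFProtocol k X O) (x : Fin k → X) : ℕ → List Bool
  | 0 => []
  | t + 1 => NOFrun P x t ++ [P.nextBit (NOFrun P x t) (NOFview (P.speaker (NOFrun P x t)) x)]

/-- `P` computes `F` if, on every input, every party determines `F x` from the
final transcript and the inputs it sees. -/
def NOFComputes {k : ℕ} {X O : Type} (P : NOFProtocol k X O) (F : (Fin k → X) → O) : Prop :=
  ∀ x i, P.out i (NOFrun P x P.T) (NOFview i x) = F x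

/-- Deterministic NOF communication complexity: the least cost of a protocol computing `F`. -/
noncomputable def DNOF (k : ℕ) (X O : Type) (F : (Fin k → X) → O) : ℕ :=
  sInf {c | ∃ P : NOFProtocol k X O, P.T = c ∧ NOFComputes P F}

/-- The `ℓ`-fold direct sum `f^ℓ`: party `j` holds the `ℓ` inputs `x j 0, …, x j (ℓ-1)`
on its forehead, and all `ℓ` values `f` on the respective instances must be computed. -/
def directSum {k n : ℕ} (ℓ : ℕ) (f : (Fin k → (Fin n → Bool)) → Bool) :
    (Fin k → (Fin ℓ → Fin n → Bool)) → (Fin ℓ → Bool) :=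
  fun x u => f fun j => x j u

-- ==== auxiliary ====

def bZ (b : Bool) : ZMod 2 := if b then 1 else 0
def zB (z : ZMod 2) : Bool := decide (z = 1)

lemma zB_bZ (b : Bool) : zB (bZ b) = b := by cases b <;> rfl
lemma bZ_zB (z : ZMod 2) : bZ (zB z) = z := by revert z; decide
lemma zB_add_self (a b : ZMod 2) : zB (a + b + b) = zB a := by revert a b; decide

def pty (k : ℕ) (hk : 2 ≤ k) (r : ℕ) : Fin k := ⟨(r+1) % k, Nat.mod_lt _ (by omega)⟩
def inst (k ℓ : ℕ) (hℓ : 0 < ℓ) (g r : ℕ) : Fin ℓ := ⟨(g*(k-1)+r) % ℓ, Nat.mod_lt _ hℓ⟩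

lemma pty_val (k : ℕ) (hk : 2 ≤ k) {r : ℕ} (h : r < k - 1) :
    (pty k hk r).val = r + 1 := by
  simp [pty, Nat.mod_eq_of_lt (by omega : r + 1 < k)]

lemma getD_range_map (B : ℕ → Bool) {t p : ℕ} (h : p < t) :
    ((List.range t).map B).getD p false = B p := by
  simp [List.getD_eq_getElem?_getD, List.getElem?_map, List.getElem?_range h]


/-- The ideal board contents: bit written at step `t` on input `x`. -/
def Bfun (k n ℓ : ℕ) (hk : 2 ≤ k) (hℓ : 0 < ℓ)
    (f : (Fin k → (Fin n → Bool)) → Bool)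
    (x : Fin k → (Fin ℓ → Fin n → Bool)) (t : ℕ) : Bool :=
  if hs : t % (n + (k-1)) < n then
    zB (∑ r ∈ Finset.range (k-1),
      bZ (x (pty k hk r) (inst k ℓ hℓ (t / (n + (k-1))) r) ⟨t % (n + (k-1)), hs⟩))
  else
    f (fun i => x i (inst k ℓ hℓ (t / (n + (k-1))) (t % (n + (k-1)) - n)))

def proto (k n ℓ m : ℕ) (hk : 2 ≤ k) (hℓ : 0 < ℓ)
    (f : (Fin k → (Fin n → Bool)) → Bool) :
    NOFProtocol k (Fin ℓ → Fin n → Bool) (Fin ℓ → Bool) where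
  T := m * (n + (k-1))
  speaker ts :=
    if ts.length % (n + (k-1)) < n then ⟨0, by omega⟩
    else pty k hk (ts.length % (n + (k-1)) - n)
  nextBit ts v :=
    if hs : ts.length % (n + (k-1)) < n then
      zB (∑ r ∈ Finset.range (k-1),
        bZ (((v (pty k hk r)).getD default)
          (inst k ℓ hℓ (ts.length / (n + (k-1))) r) ⟨ts.length % (n + (k-1)), hs⟩))
    else
      f (fun i =>
        if i = pty k hk (ts.length % (n + (k-1)) - n) then
          fun sb => zB (bZ (ts.getD ((ts.length / (n + (k-1))) * (n + (k-1)) + sb.val) false) +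
            ∑ r ∈ (Finset.range (k-1)).filter
                (fun r => pty k hk r ≠ pty k hk (ts.length % (n + (k-1)) - n)),
              bZ (((v (pty k hk r)).getD default)
                (inst k ℓ hℓ (ts.length / (n + (k-1))) r) sb))
        else ((v i).getD default)
          (inst k ℓ hℓ (ts.length / (n + (k-1))) (ts.length % (n + (k-1)) - n)))
  out _ ts _ := fun u =>
    ts.getD ((u.val / (k-1)) * (n + (k-1)) + n + u.val % (k-1)) false


lemma step_eq (k n ℓ m : ℕ) (hk : 2 ≤ k) (hn : 1 ≤ n) (hℓ : 0 < ℓ)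
    (f : (Fin k → (Fin n → Bool)) → Bool)
    (x : Fin k → (Fin ℓ → Fin n → Bool)) (t : ℕ) :
    (proto k n ℓ m hk hℓ f).nextBit ((List.range t).map (Bfun k n ℓ hk hℓ f x))
      (NOFview ((proto k n ℓ m hk hℓ f).speaker
        ((List.range t).map (Bfun k n ℓ hk hℓ f x))) x)
    = Bfun k n ℓ hk hℓ f x t := by
  set q := n + (k-1) with hq
  have hq0 : 0 < q := by omega
  set trans := (List.range t).map (Bfun k n ℓ hk hℓ f x) with htrans
  have hlen : trans.length = t := by simp [htrans]
  by_cases hs : t % q < n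
  · -- XOR phase
    have hsp : (proto k n ℓ m hk hℓ f).speaker trans = ⟨0, by omega⟩ := by
      have hs' : t % (n + (k-1)) < n := hs
      simp [proto, hlen, hs']
    rw [hsp]
    simp only [proto, Bfun, hlen]
    rw [dif_pos hs, dif_pos hs]
    congr 1
    refine Finset.sum_congr rfl (fun r hr => ?_)
    have hr' : r < k - 1 := Finset.mem_range.mp hr
    have hne : pty k hk r ≠ ⟨0, by omega⟩ := by
      simp only [ne_eq, pty, Fin.mk.injEq]
      rw [Nat.mod_eq_of_lt (by omega : r + 1 < k)]
      omega
    simp [NOFview, hne]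
  · -- answer phase
    have hsq : t % q < q := Nat.mod_lt _ hq0
    set s := t % q with hsdef
    set g := t / q with hgdef
    set r0 := s - n with hr0def
    have hr0 : r0 < k - 1 := by omega
    have hsp : (proto k n ℓ m hk hℓ f).speaker trans = pty k hk r0 := by
      have hs' : ¬ t % (n + (k-1)) < n := hs
      simp only [proto, hlen]
      exact if_neg hs'
    rw [hsp]
    simp only [proto, Bfun, hlen]
    rw [dif_neg hs, dif_neg hs]
    congr 1
    funext i
    by_cases hi : i = pty k hk r0
    · rw [if_pos hi, hi]
      funext sb
      have htq : g * q + s = t := by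
        rw [Nat.mul_comm]; exact Nat.div_add_mod t q
      have hp : g * q + sb.val < t := by
        have := sb.isLt; omega
      rw [getD_range_map _ hp]
      have hpm : (g * q + sb.val) % q = sb.val := by
        rw [Nat.add_comm, Nat.add_mul_mod_self_right,
          Nat.mod_eq_of_lt (by omega : sb.val < q)]
      have hpd : (g * q + sb.val) / q = g := by
        rw [Nat.add_comm, Nat.add_mul_div_right _ _ hq0,
          Nat.div_eq_of_lt (by omega : sb.val < q)]
        omega
      have hsb : (g * q + sb.val) % q < n := by omega
      rw [Bfun, dif_pos hsb]
      have hfin : (⟨(g * q + sb.val) % q, hsb⟩ : Fin n) = sb := by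
        apply Fin.ext; simp [hpm]
      rw [hpd, hfin, bZ_zB]
      -- rewrite views in the filtered sum
      have hsum : ∑ r ∈ (Finset.range (k-1)).filter
            (fun r => pty k hk r ≠ pty k hk r0),
            bZ (((NOFview (pty k hk r0) x (pty k hk r)).getD default)
              (inst k ℓ hℓ g r) sb)
          = ∑ r ∈ (Finset.range (k-1)).erase r0,
            bZ (x (pty k hk r) (inst k ℓ hℓ g r) sb) := by
        have hfil : (Finset.range (k-1)).filter
            (fun r => pty k hk r ≠ pty k hk r0) = (Finset.range (k-1)).erase r0 := by
          ext r
          simp only [Finset.mem_filter, Finset.mem_erase, Finset.mem_range]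
          constructor
          · rintro ⟨h1, h2⟩
            refine ⟨fun h => h2 (by rw [h]), h1⟩
          · rintro ⟨h1, h2⟩
            refine ⟨h2, fun h => h1 ?_⟩
            have := congrArg Fin.val h
            rw [pty_val k hk h2, pty_val k hk hr0] at this
            omega
        rw [hfil]
        refine Finset.sum_congr rfl (fun r hr => ?_)
        have hrr : r ≠ r0 := (Finset.mem_erase.mp hr).1
        have hrk : r < k - 1 := Finset.mem_range.mp (Finset.mem_erase.mp hr).2
        have hne : pty k hk r ≠ pty k hk r0 := by
          intro h
          have := congrArg Fin.val h
          rw [pty_val k hk hrk, pty_val k hk hr0] at this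
          omega
        simp [NOFview, hne]
      rw [hsum]
      have hsplit : ∑ r ∈ Finset.range (k-1),
            bZ (x (pty k hk r) (inst k ℓ hℓ g r) sb)
          = bZ (x (pty k hk r0) (inst k ℓ hℓ g r0) sb)
            + ∑ r ∈ (Finset.range (k-1)).erase r0,
              bZ (x (pty k hk r) (inst k ℓ hℓ g r) sb) :=
        (Finset.add_sum_erase _ _ (Finset.mem_range.mpr hr0)).symm
      rw [hsplit, add_assoc, add_comm (∑ r ∈ (Finset.range (k-1)).erase r0, _), ← add_assoc]
      rw [zB_add_self, zB_bZ]
    · rw [if_neg hi]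
      simp [NOFview, hi]


lemma run_eq (k n ℓ m : ℕ) (hk : 2 ≤ k) (hn : 1 ≤ n) (hℓ : 0 < ℓ)
    (f : (Fin k → (Fin n → Bool)) → Bool)
    (x : Fin k → (Fin ℓ → Fin n → Bool)) (t : ℕ) :
    NOFrun (proto k n ℓ m hk hℓ f) x t
      = (List.range t).map (Bfun k n ℓ hk hℓ f x) := by
  induction t with
  | zero => simp [NOFrun]
  | succ t ih =>
    rw [NOFrun, ih, List.range_succ, List.map_append, List.map_cons, List.map_nil]
    congr 2
    exact step_eq k n ℓ m hk hn hℓ f x t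

lemma proto_computes (k n ℓ m : ℕ) (hk : 2 ≤ k) (hn : 1 ≤ n) (hℓ : 0 < ℓ)
    (hm : ℓ = m * (k - 1))
    (f : (Fin k → (Fin n → Bool)) → Bool) :
    NOFComputes (proto k n ℓ m hk hℓ f) (directSum ℓ f) := by
  intro x i
  funext u
  set q := n + (k-1) with hq
  have hq0 : 0 < q := by omega
  have hk1 : 0 < k - 1 := by omega
  set g := u.val / (k-1) with hgdef
  set r := u.val % (k-1) with hrdef
  have hrk : r < k - 1 := Nat.mod_lt _ hk1
  have hgu : g * (k-1) + r = u.val := by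
    rw [Nat.mul_comm]; exact Nat.div_add_mod u.val (k-1)
  have hgm : g < m := by
    have := u.isLt
    rcases Nat.lt_or_ge g m with h | h
    · exact h
    · exfalso; nlinarith [u.isLt]
  have hout : (proto k n ℓ m hk hℓ f).out i
      (NOFrun (proto k n ℓ m hk hℓ f) x (proto k n ℓ m hk hℓ f).T) (NOFview i x) u
      = (NOFrun (proto k n ℓ m hk hℓ f) x (m * q)).getD (g * q + n + r) false := rfl
  rw [hout, run_eq k n ℓ m hk hn hℓ f x]
  have hp : g * q + n + r < m * q := by
    calc g * q + n + r < g * q + q := by omega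
      _ = (g + 1) * q := by ring
      _ ≤ m * q := Nat.mul_le_mul_right _ hgm
  rw [getD_range_map _ hp]
  have hpm : (g * q + n + r) % q = n + r := by
    rw [add_assoc, Nat.add_comm, Nat.add_mul_mod_self_right,
      Nat.mod_eq_of_lt (by omega : n + r < q)]
  have hpd : (g * q + n + r) / q = g := by
    rw [add_assoc, Nat.add_comm, Nat.add_mul_div_right _ _ hq0,
      Nat.div_eq_of_lt (by omega : n + r < q)]
    omega
  have hns : ¬ ((g * q + n + r) % q < n) := by omega
  rw [Bfun, dif_neg hns, hpd]
  have hinst : inst k ℓ hℓ g ((g * q + n + r) % q - n) = u := by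
    apply Fin.ext
    rw [hpm]
    simp only [inst]
    have : n + r - n = r := by omega
    rw [this, hgu, Nat.mod_eq_of_lt u.isLt]
  rw [hinst]
  rfl

/-- For every `k ≥ 2`, `n ≥ 1`, every `f : ({0,1}^n)^k → {0,1}`
and every `ℓ ≥ 1` with `(k-1) ∣ ℓ`, we have `D^NOF(f^ℓ) ≤ ℓ·n/(k-1) + ℓ`. -/
theorem dnof_directSum_le (k n ℓ : ℕ) (hk : 2 ≤ k) (hn : 1 ≤ n) (hℓ : 1 ≤ ℓ)
    (hdvd : (k - 1) ∣ ℓ) (f : (Fin k → (Fin n → Bool)) → Bool) :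
    DNOF k (Fin ℓ → Fin n → Bool) (Fin ℓ → Bool) (directSum ℓ f) ≤
      ℓ * n / (k - 1) + ℓ := by
  obtain ⟨m, hm⟩ := hdvd
  have hk1 : 0 < k - 1 := by omega
  have hm' : ℓ = m * (k - 1) := by rw [hm, Nat.mul_comm]
  have hℓ0 : 0 < ℓ := hℓ
  have hval : m * (n + (k - 1)) = ℓ * n / (k - 1) + ℓ := by
    have h1 : ℓ * n / (k - 1) = m * n := by
      rw [hm', show m * (k - 1) * n = m * n * (k - 1) by ring,
        Nat.mul_div_cancel _ hk1]
    rw [h1, hm']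
    ring
  apply Nat.sInf_le
  exact ⟨proto k n ℓ m hk hℓ0 f, hval, proto_computes k n ℓ m hk hn hℓ0 hm' f⟩
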